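/- Define S : ℕ → ℕ by S 0 = 1, S 1 = 1, S 2 = 1, and S n = S (n-1) + Σ_{j=3}^{n} S (j-2) · S (n-j) for n ≥ 3. Then S n equals the number of involutions σ on {1,…,n} that avoid the pattern 3412 and contain no transposition of the form (i, i+1); equivalently, the number of partial matchings on n points on a line with noncrossing arcs where no arc connects two adjacent points. -/

import Mathlib

set_option maxRecDepth 4000

/-- A partial matching on `n` linearly ordered points (0-indexed), given as a finite
set of arcs `(i,j)` with `i + 2 ≤ j` (so no arc connects two adjacent points),
with all arc endpoints pairwise distinct. -/
def IsMatching (n : ℕ) (M : Finset (Fin n × Fin n)) : Prop :=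
  (∀ p ∈ M, p.1.val + 2 ≤ p.2.val) ∧
  ∀ p ∈ M, ∀ q ∈ M, p ≠ q →
    p.1 ≠ q.1 ∧ p.1 ≠ q.2 ∧ p.2 ≠ q.1 ∧ p.2 ≠ q.2

/-- No two arcs cross. -/
def Noncrossing (n : ℕ) (M : Finset (Fin n × Fin n)) : Prop :=
  ∀ p ∈ M, ∀ q ∈ M, ¬(p.1 < q.1 ∧ q.1 < p.2 ∧ p.2 < q.2)

/-- The matching is invariant under the reflection `i ↦ n+1-i` (here `Fin.rev`). -/
def SymmMatching (n : ℕ) (M : Finset (Fin n × Fin n)) : Prop :=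
  ∀ p ∈ M, (p.2.rev, p.1.rev) ∈ M


def NOk (n : ℕ) (M : Finset (ℕ × ℕ)) : Prop :=
  (∀ p ∈ M, p.1 + 2 ≤ p.2 ∧ p.2 < n) ∧
  (∀ p ∈ M, ∀ q ∈ M, p ≠ q → p.1 ≠ q.1 ∧ p.1 ≠ q.2 ∧ p.2 ≠ q.1 ∧ p.2 ≠ q.2) ∧
  (∀ p ∈ M, ∀ q ∈ M, ¬(p.1 < q.1 ∧ q.1 < p.2 ∧ p.2 < q.2))

lemma NOk_subset {n : ℕ} {M M' : Finset (ℕ × ℕ)} (hs : M' ⊆ M) (h : NOk n M) : NOk n M' :=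
  ⟨fun p hp => h.1 p (hs hp),
   fun p hp q hq => h.2.1 p (hs hp) q (hs hq),
   fun p hp q hq => h.2.2 p (hs hp) q (hs hq)⟩

lemma NOk_down {n : ℕ} (m c : ℕ) {M : Finset (ℕ × ℕ)} (h : NOk n M)
    (hlo : ∀ p ∈ M, c ≤ p.1) (hhi : ∀ p ∈ M, p.2 < c + m) :
    NOk m (M.image (fun p => (p.1 - c, p.2 - c))) := by
  obtain ⟨h1, h2, h3⟩ := h
  refine ⟨?_, ?_, ?_⟩
  · intro q hq
    rw [Finset.mem_image] at hq
    obtain ⟨p, hp, rfl⟩ := hq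
    have := h1 p hp; have := hlo p hp; have := hhi p hp
    constructor <;> simp <;> omega
  · intro q hq q' hq' hne
    rw [Finset.mem_image] at hq hq'
    obtain ⟨p, hp, rfl⟩ := hq
    obtain ⟨p', hp', rfl⟩ := hq'
    have hpp : p ≠ p' := fun h => hne (by rw [h])
    obtain ⟨a, b, cc, d⟩ := h2 p hp p' hp' hpp
    have := h1 p hp; have := h1 p' hp'
    have := hlo p hp; have := hlo p' hp'
    refine ⟨?_, ?_, ?_, ?_⟩ <;> simp <;> omega
  · intro q hq q' hq'
    rw [Finset.mem_image] at hq hq'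
    obtain ⟨p, hp, rfl⟩ := hq
    obtain ⟨p', hp', rfl⟩ := hq'
    have := h3 p hp p' hp'
    have := h1 p hp; have := h1 p' hp'
    have := hlo p hp; have := hlo p' hp'
    simp only [Prod.fst, Prod.snd]
    omega

lemma NOk_up {m : ℕ} (c n : ℕ) (hcm : c + m ≤ n) {M : Finset (ℕ × ℕ)} (h : NOk m M) :
    NOk n (M.image (fun p => (p.1 + c, p.2 + c))) := by
  obtain ⟨h1, h2, h3⟩ := h
  refine ⟨?_, ?_, ?_⟩
  · intro q hq
    rw [Finset.mem_image] at hq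
    obtain ⟨p, hp, rfl⟩ := hq
    have := h1 p hp
    constructor <;> simp <;> omega
  · intro q hq q' hq' hne
    rw [Finset.mem_image] at hq hq'
    obtain ⟨p, hp, rfl⟩ := hq
    obtain ⟨p', hp', rfl⟩ := hq'
    have hpp : p ≠ p' := fun h => hne (by rw [h])
    obtain ⟨a, b, cc, d⟩ := h2 p hp p' hp' hpp
    refine ⟨?_, ?_, ?_, ?_⟩ <;> simp <;> omega
  · intro q hq q' hq'
    rw [Finset.mem_image] at hq hq'
    obtain ⟨p, hp, rfl⟩ := hq
    obtain ⟨p', hp', rfl⟩ := hq'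
    have := h3 p hp p' hp'
    simp only [Prod.fst, Prod.snd]
    omega

lemma NOk_up_bounds {m : ℕ} (c : ℕ) {M : Finset (ℕ × ℕ)} (h : NOk m M) :
    ∀ p ∈ M.image (fun p => (p.1 + c, p.2 + c)), c ≤ p.1 ∧ p.2 < c + m := by
  intro q hq
  rw [Finset.mem_image] at hq
  obtain ⟨p, hp, rfl⟩ := hq
  have := h.1 p hp
  constructor <;> simp <;> omega

lemma NOk_union {n : ℕ} {M1 M2 : Finset (ℕ × ℕ)} (h1 : NOk n M1) (h2 : NOk n M2)
    (hsep : ∀ p ∈ M1, ∀ q ∈ M2, p.2 < q.1) : NOk n (M1 ∪ M2) := by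
  refine ⟨?_, ?_, ?_⟩
  · intro p hp
    rcases Finset.mem_union.1 hp with h | h
    exacts [h1.1 p h, h2.1 p h]
  · intro p hp q hq hne
    rcases Finset.mem_union.1 hp with hp | hp <;> rcases Finset.mem_union.1 hq with hq | hq
    · exact h1.2.1 p hp q hq hne
    · have := hsep p hp q hq
      have := h1.1 p hp; have := h2.1 q hq
      refine ⟨by omega, by omega, by omega, by omega⟩
    · have := hsep q hq p hp
      have := h2.1 p hp; have := h1.1 q hq
      refine ⟨by omega, by omega, by omega, by omega⟩
    · exact h2.2.1 p hp q hq hne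
  · intro p hp q hq
    rcases Finset.mem_union.1 hp with hp | hp <;> rcases Finset.mem_union.1 hq with hq | hq
    · exact h1.2.2 p hp q hq
    · have := hsep p hp q hq
      have := h1.1 p hp; have := h2.1 q hq
      omega
    · have := hsep q hq p hp
      have := h2.1 p hp; have := h1.1 q hq
      omega
    · exact h2.2.2 p hp q hq

lemma NOk_insert_zero {n k : ℕ} (hk : 2 ≤ k) (hkn : k < n) {M : Finset (ℕ × ℕ)}
    (h : NOk n M) (hav : ∀ p ∈ M, (0 < p.1 ∧ p.2 < k) ∨ k < p.1) :
    NOk n (insert ((0 : ℕ), k) M) := by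
  refine ⟨?_, ?_, ?_⟩
  · intro p hp
    rcases Finset.mem_insert.1 hp with rfl | hp
    · exact ⟨by omega, hkn⟩
    · exact h.1 p hp
  · intro p hp q hq hne
    rcases Finset.mem_insert.1 hp with rfl | hp <;> rcases Finset.mem_insert.1 hq with rfl | hq
    · exact absurd rfl hne
    · have := h.1 q hq; have := hav q hq
      refine ⟨by omega, by omega, by omega, by omega⟩
    · have := h.1 p hp; have := hav p hp
      refine ⟨by omega, by omega, by omega, by omega⟩
    · exact h.2.1 p hp q hq hne
  · intro p hp q hq
    rcases Finset.mem_insert.1 hp with rfl | hp <;> rcases Finset.mem_insert.1 hq with rfl | hq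
    · omega
    · have := h.1 q hq; have := hav q hq
      simp only [Prod.fst, Prod.snd]; omega
    · have := h.1 p hp; have := hav p hp
      simp only [Prod.fst, Prod.snd]; omega
    · exact h.2.2 p hp q hq

lemma NOk_split {n k : ℕ} {M : Finset (ℕ × ℕ)} (h : NOk n M) (hmem : ((0 : ℕ), k) ∈ M) :
    ∀ p ∈ M, p ≠ (0, k) → (1 ≤ p.1 ∧ p.2 < k) ∨ (k + 1 ≤ p.1) := by
  intro p hp hne
  obtain ⟨a, b, cc, d⟩ := h.2.1 p hp (0, k) hmem hne
  have := h.2.2 (0, k) hmem p hp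
  have := h.1 p hp
  simp only [Prod.fst, Prod.snd] at *
  omega

lemma image_up_down (c : ℕ) (M : Finset (ℕ × ℕ)) :
    ((M.image (fun p => (p.1 + c, p.2 + c))).image (fun p => (p.1 - c, p.2 - c))) = M := by
  rw [Finset.image_image]
  have : Set.EqOn ((fun p : ℕ × ℕ => (p.1 - c, p.2 - c)) ∘ (fun p => (p.1 + c, p.2 + c))) id ↑M := by
    intro p _; simp
  rw [Finset.image_congr this, Finset.image_id]

lemma image_down_up (c : ℕ) (M : Finset (ℕ × ℕ)) (h : ∀ p ∈ M, c ≤ p.1 ∧ c ≤ p.2) :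
    ((M.image (fun p => (p.1 - c, p.2 - c))).image (fun p => (p.1 + c, p.2 + c))) = M := by
  rw [Finset.image_image]
  have : Set.EqOn ((fun p : ℕ × ℕ => (p.1 + c, p.2 + c)) ∘ (fun p => (p.1 - c, p.2 - c))) id ↑M := by
    intro p hp
    have := h p hp
    simp only [Function.comp_apply, id_eq]
    ext <;> simp <;> omega
  rw [Finset.image_congr this, Finset.image_id]

instance (n : ℕ) (M : Finset (ℕ × ℕ)) : Decidable (NOk n M) := by
  unfold NOk; infer_instance

def UU (n : ℕ) : Finset (Finset (ℕ × ℕ)) :=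
  ((Finset.range n ×ˢ Finset.range n).powerset).filter (NOk n)

lemma mem_UU {n : ℕ} {M : Finset (ℕ × ℕ)} : M ∈ UU n ↔ NOk n M := by
  rw [UU, Finset.mem_filter, Finset.mem_powerset]
  refine ⟨fun h => h.2, fun h => ⟨?_, h⟩⟩
  intro p hp
  have := h.1 p hp
  exact Finset.mem_product.2 ⟨Finset.mem_range.2 (by omega), Finset.mem_range.2 (by omega)⟩

def TT (n : ℕ) : ℕ := (UU n).card

lemma cardA (n : ℕ) (hn : 1 ≤ n) :
    ((UU n).filter (fun M => ∀ p ∈ M, p.1 ≠ 0)).card = TT (n - 1) := by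
  classical
  apply Finset.card_nbij' (fun M => M.image (fun p => (p.1 - 1, p.2 - 1)))
    (fun M => M.image (fun p => (p.1 + 1, p.2 + 1)))
  · intro M hM
    rw [Finset.mem_coe, Finset.mem_filter, mem_UU] at hM
    obtain ⟨hok, h0⟩ := hM
    rw [Finset.mem_coe, mem_UU]
    apply NOk_down (n - 1) 1 hok
    · intro p hp
      have := h0 p hp; omega
    · intro p hp
      have := hok.1 p hp; omega
  · intro M hM
    rw [Finset.mem_coe, mem_UU] at hM
    rw [Finset.mem_coe, Finset.mem_filter, mem_UU]
    constructor
    · exact NOk_up 1 n (by omega) hM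
    · intro p hp
      have := NOk_up_bounds 1 hM p hp; omega
  · intro M hM
    rw [Finset.mem_coe, Finset.mem_filter, mem_UU] at hM
    apply image_down_up
    intro p hp
    have := hM.1.1 p hp
    have := hM.2 p hp
    omega
  · intro M _
    exact image_up_down 1 M

lemma cardB (n k : ℕ) (hk : 2 ≤ k) (hkn : k < n) :
    ((UU n).filter (fun M => ((0 : ℕ), k) ∈ M)).card = TT (k - 1) * TT (n - 1 - k) := by
  classical
  rw [TT, TT, ← Finset.card_product]
  apply Finset.card_nbij'
    (fun M => (((M.erase (0, k)).filter (fun p => p.2 < k)).image (fun p => (p.1 - 1, p.2 - 1)),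
               ((M.erase (0, k)).filter (fun p => k < p.1)).image
                 (fun p => (p.1 - (k + 1), p.2 - (k + 1)))))
    (fun Q => insert ((0 : ℕ), k) ((Q.1.image (fun p => (p.1 + 1, p.2 + 1))) ∪
               (Q.2.image (fun p => (p.1 + (k + 1), p.2 + (k + 1))))))
  · intro M hM
    rw [Finset.mem_coe, Finset.mem_filter, mem_UU] at hM
    obtain ⟨hok, h0k⟩ := hM
    have hsub1 : (M.erase (0, k)).filter (fun p => p.2 < k) ⊆ M :=
      (Finset.filter_subset _ _).trans (Finset.erase_subset _ _)
    have hsub2 : (M.erase (0, k)).filter (fun p => k < p.1) ⊆ M :=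
      (Finset.filter_subset _ _).trans (Finset.erase_subset _ _)
    rw [Finset.mem_coe, Finset.mem_product, mem_UU, mem_UU]
    constructor
    · apply NOk_down (k - 1) 1 (NOk_subset hsub1 hok)
      · intro p hp
        rw [Finset.mem_filter, Finset.mem_erase] at hp
        have := NOk_split hok h0k p hp.1.2 hp.1.1
        have := hok.1 p hp.1.2
        omega
      · intro p hp
        rw [Finset.mem_filter] at hp
        omega
    · apply NOk_down (n - 1 - k) (k + 1) (NOk_subset hsub2 hok)
      · intro p hp
        rw [Finset.mem_filter] at hp
        omega
      · intro p hp
        have := hok.1 p (hsub2 hp)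
        omega
  · intro Q hQ
    rw [Finset.mem_coe, Finset.mem_product, mem_UU, mem_UU] at hQ
    obtain ⟨h1, h2⟩ := hQ
    rw [Finset.mem_coe, Finset.mem_filter, mem_UU]
    have hu1 := NOk_up 1 n (by omega) h1
    have hu2 := NOk_up (k + 1) n (by omega) h2
    have hb1 := NOk_up_bounds 1 h1
    have hb2 := NOk_up_bounds (k + 1) h2
    refine ⟨?_, Finset.mem_insert_self _ _⟩
    apply NOk_insert_zero hk hkn
    · apply NOk_union hu1 hu2
      intro p hp q hq
      have := hb1 p hp; have := hb2 q hq
      omega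
    · intro p hp
      rcases Finset.mem_union.1 hp with hp | hp
      · have := hb1 p hp; left; omega
      · have := hb2 p hp; right; omega
  · intro M hM
    rw [Finset.mem_coe, Finset.mem_filter, mem_UU] at hM
    obtain ⟨hok, h0k⟩ := hM
    simp only
    rw [image_down_up, image_down_up]
    · have hunion : ((M.erase (0, k)).filter (fun p => p.2 < k)) ∪
          ((M.erase (0, k)).filter (fun p => k < p.1)) = M.erase (0, k) := by
        ext p
        rw [Finset.mem_union, Finset.mem_filter, Finset.mem_filter]
        constructor
        · rintro (h | h) <;> exact h.1
        · intro h
          rw [Finset.mem_erase] at h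
          have hs := NOk_split hok h0k p h.2 h.1
          rw [Finset.mem_erase]
          rcases hs with hs | hs
          · exact Or.inl ⟨h, hs.2⟩
          · exact Or.inr ⟨h, by omega⟩
      rw [hunion, Finset.insert_erase h0k]
    · intro p hp
      rw [Finset.mem_filter, Finset.mem_erase] at hp
      have := hok.1 p hp.1.2
      omega
    · intro p hp
      rw [Finset.mem_filter, Finset.mem_erase] at hp
      obtain ⟨⟨hne, hpM⟩, hklt⟩ := hp
      have := NOk_split hok h0k p hpM hne
      have := hok.1 p hpM
      omega
  · intro Q hQ
    rw [Finset.mem_coe, Finset.mem_product, mem_UU, mem_UU] at hQ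
    obtain ⟨h1, h2⟩ := hQ
    have hb1 := NOk_up_bounds 1 h1
    have hb2 := NOk_up_bounds (k + 1) h2
    have hn1 := NOk_up 1 n (by omega) h1
    have hn2 := NOk_up (k + 1) n (by omega) h2
    have hnotmem : ((0 : ℕ), k) ∉ (Q.1.image (fun p => (p.1 + 1, p.2 + 1))) ∪
        (Q.2.image (fun p => (p.1 + (k + 1), p.2 + (k + 1)))) := by
      intro h
      rcases Finset.mem_union.1 h with h | h
      · have := (hb1 _ h).1; simp at this
      · have := (hb2 _ h).1; simp at this
    have herase := Finset.erase_insert hnotmem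
    simp only [herase, Finset.filter_union]
    have e1 : (Q.1.image (fun p => (p.1 + 1, p.2 + 1))).filter (fun p => p.2 < k) =
        Q.1.image (fun p => (p.1 + 1, p.2 + 1)) := by
      apply Finset.filter_true_of_mem
      intro p hp; have := hb1 p hp; omega
    have e2 : (Q.2.image (fun p => (p.1 + (k + 1), p.2 + (k + 1)))).filter (fun p => p.2 < k) =
        ∅ := by
      apply Finset.filter_false_of_mem
      intro p hp
      have := hb2 p hp
      have := hn2.1 p hp
      omega
    have e3 : (Q.1.image (fun p => (p.1 + 1, p.2 + 1))).filter (fun p => k < p.1) = ∅ := by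
      apply Finset.filter_false_of_mem
      intro p hp
      have := hb1 p hp
      have := hn1.1 p hp
      omega
    have e4 : (Q.2.image (fun p => (p.1 + (k + 1), p.2 + (k + 1)))).filter (fun p => k < p.1) =
        Q.2.image (fun p => (p.1 + (k + 1), p.2 + (k + 1))) := by
      apply Finset.filter_true_of_mem
      intro p hp; have := hb2 p hp; omega
    rw [e1, e2, e3, e4, Finset.union_empty, Finset.empty_union,
      image_up_down, image_up_down]

lemma TT_rec (n : ℕ) (hn : 3 ≤ n) :
    TT n = TT (n - 1) + ∑ j ∈ Finset.Icc 3 n, TT (j - 2) * TT (n - j) := by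
  classical
  have hsplit := Finset.card_filter_add_card_filter_not
    (s := UU n) (p := fun M => ∀ p ∈ M, p.1 ≠ 0)
  have hA := cardA n (by omega)
  have hBU : (UU n).filter (fun M => ¬ ∀ p ∈ M, p.1 ≠ 0) =
      (Finset.Icc 2 (n - 1)).biUnion
        (fun k => (UU n).filter (fun M => ((0 : ℕ), k) ∈ M)) := by
    ext M
    simp only [Finset.mem_filter, Finset.mem_biUnion, Finset.mem_Icc]
    constructor
    · rintro ⟨hM, hex⟩
      push_neg at hex
      obtain ⟨p, hp, hp0⟩ := hex
      have hb := (mem_UU.1 hM).1 p hp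
      refine ⟨p.2, ⟨by omega, by omega⟩, hM, ?_⟩
      rw [← hp0]
      simpa using hp
    · rintro ⟨k, ⟨hk2, hkn⟩, hM, hkM⟩
      refine ⟨hM, ?_⟩
      push_neg
      exact ⟨(0, k), hkM, rfl⟩
  have hdisj : ∀ k ∈ Finset.Icc 2 (n - 1), ∀ k' ∈ Finset.Icc 2 (n - 1), k ≠ k' →
      Disjoint ((UU n).filter (fun M => ((0 : ℕ), k) ∈ M))
        ((UU n).filter (fun M => ((0 : ℕ), k') ∈ M)) := by
    intro k _ k' _ hkk'
    rw [Finset.disjoint_left]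
    intro M h1 h2
    rw [Finset.mem_filter] at h1 h2
    have hne : ((0 : ℕ), k) ≠ ((0 : ℕ), k') := fun h => hkk' (congrArg Prod.snd h)
    obtain ⟨a, _, _, _⟩ := (mem_UU.1 h1.1).2.1 (0, k) h1.2 (0, k') h2.2 hne
    exact a rfl
  have hcB : ∀ k ∈ Finset.Icc 2 (n - 1),
      ((UU n).filter (fun M => ((0 : ℕ), k) ∈ M)).card = TT (k - 1) * TT (n - 1 - k) := by
    intro k hk
    rw [Finset.mem_Icc] at hk
    exact cardB n k hk.1 (by omega)
  have hsum : ∑ k ∈ Finset.Icc 2 (n - 1),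
      ((UU n).filter (fun M => ((0 : ℕ), k) ∈ M)).card =
      ∑ j ∈ Finset.Icc 3 n, TT (j - 2) * TT (n - j) :=
    calc ∑ k ∈ Finset.Icc 2 (n - 1),
        ((UU n).filter (fun M => ((0 : ℕ), k) ∈ M)).card
        = ∑ k ∈ Finset.Icc 2 (n - 1), TT (k - 1) * TT (n - 1 - k) :=
          Finset.sum_congr rfl hcB
      _ = ∑ j ∈ Finset.Icc 3 n, TT (j - 2) * TT (n - j) := by
          apply Finset.sum_nbij' (fun k => k + 1) (fun j => j - 1)
          · intro k hk; rw [Finset.mem_Icc] at *; omega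
          · intro j hj; rw [Finset.mem_Icc] at *; omega
          · intro k _; omega
          · intro j hj; rw [Finset.mem_Icc] at hj; omega
          · intro k hk
            have e1 : k + 1 - 2 = k - 1 := by omega
            have e2 : n - (k + 1) = n - 1 - k := by omega
            rw [e1, e2]
  calc TT n = ((UU n).filter (fun M => ∀ p ∈ M, p.1 ≠ 0)).card +
      ((UU n).filter (fun M => ¬ ∀ p ∈ M, p.1 ≠ 0)).card := hsplit.symm
    _ = TT (n - 1) + ∑ j ∈ Finset.Icc 3 n, TT (j - 2) * TT (n - j) := by
        rw [hA, hBU, Finset.card_biUnion hdisj, hsum]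

lemma finj (n : ℕ) : Function.Injective (fun p : Fin n × Fin n => (p.1.val, p.2.val)) := by
  intro p q h
  simp only [Prod.mk.injEq] at h
  exact Prod.ext (Fin.val_injective h.1) (Fin.val_injective h.2)

lemma exists_preimage (n : ℕ) (M' : Finset (ℕ × ℕ)) (h : ∀ p ∈ M', p.1 < n ∧ p.2 < n) :
    ∃ M : Finset (Fin n × Fin n), M.image (fun p => (p.1.val, p.2.val)) = M' := by
  classical
  induction M' using Finset.induction_on with
  | empty => exact ⟨∅, rfl⟩
  | @insert a s ha ih =>
    obtain ⟨M, hM⟩ := ih (fun p hp => h p (Finset.mem_insert_of_mem hp))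
    have ha1 : a.1 < n := (h a (Finset.mem_insert_self a s)).1
    have ha2 : a.2 < n := (h a (Finset.mem_insert_self a s)).2
    refine ⟨insert (⟨a.1, ha1⟩, ⟨a.2, ha2⟩) M, ?_⟩
    rw [Finset.image_insert, hM]

lemma TT_eq (n : ℕ) :
    Nat.card {M : Finset (Fin n × Fin n) // IsMatching n M ∧ Noncrossing n M} = TT n := by
  classical
  rw [Nat.card_eq_fintype_card, Fintype.card_subtype, TT]
  apply Finset.card_bij (fun M _ => M.image (fun p : Fin n × Fin n => (p.1.val, p.2.val)))
  · intro M hM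
    rw [Finset.mem_filter] at hM
    obtain ⟨⟨hm1, hm2⟩, hc⟩ := hM.2
    rw [mem_UU]
    refine ⟨?_, ?_, ?_⟩
    · intro q hq
      rw [Finset.mem_image] at hq
      obtain ⟨p, hp, rfl⟩ := hq
      exact ⟨hm1 p hp, p.2.isLt⟩
    · intro q hq q' hq' hne
      rw [Finset.mem_image] at hq hq'
      obtain ⟨p, hp, rfl⟩ := hq
      obtain ⟨p', hp', rfl⟩ := hq'
      have hpp : p ≠ p' := fun h => hne (by rw [h])
      obtain ⟨a, b, c, d⟩ := hm2 p hp p' hp' hpp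
      exact ⟨Fin.val_ne_of_ne a, Fin.val_ne_of_ne b, Fin.val_ne_of_ne c, Fin.val_ne_of_ne d⟩
    · intro q hq q' hq'
      rw [Finset.mem_image] at hq hq'
      obtain ⟨p, hp, rfl⟩ := hq
      obtain ⟨p', hp', rfl⟩ := hq'
      exact fun h => hc p hp p' hp' ⟨h.1, h.2.1, h.2.2⟩
  · intro M1 h1 M2 h2 h
    exact Finset.image_injective (finj n) h
  · intro M' hM'
    rw [mem_UU] at hM'
    obtain ⟨hn1, hn2, hn3⟩ := hM'
    obtain ⟨M, hM⟩ := exists_preimage n M' (fun p hp => by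
      have := hn1 p hp
      exact ⟨lt_of_le_of_lt (by omega) this.2, this.2⟩)
    refine ⟨M, ?_, hM⟩
    rw [Finset.mem_filter]
    refine ⟨Finset.mem_univ M, ⟨?_, ?_⟩, ?_⟩
    · intro p hp
      have : (p.1.val, p.2.val) ∈ M' := by
        rw [← hM]; exact Finset.mem_image_of_mem _ hp
      exact (hn1 _ this).1
    · intro p hp q hq hne
      have hp' : (p.1.val, p.2.val) ∈ M' := by
        rw [← hM]; exact Finset.mem_image_of_mem _ hp
      have hq' : (q.1.val, q.2.val) ∈ M' := by
        rw [← hM]; exact Finset.mem_image_of_mem _ hq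
      have hne' : (p.1.val, p.2.val) ≠ (q.1.val, q.2.val) := fun h => hne (finj n h)
      obtain ⟨a, b, c, d⟩ := hn2 _ hp' _ hq' hne'
      exact ⟨fun h => a (congrArg Fin.val h), fun h => b (congrArg Fin.val h),
        fun h => c (congrArg Fin.val h), fun h => d (congrArg Fin.val h)⟩
    · intro p hp q hq
      have hp' : (p.1.val, p.2.val) ∈ M' := by
        rw [← hM]; exact Finset.mem_image_of_mem _ hp
      have hq' : (q.1.val, q.2.val) ∈ M' := by
        rw [← hM]; exact Finset.mem_image_of_mem _ hq
      exact fun h => hn3 _ hp' _ hq' ⟨h.1, h.2.1, h.2.2⟩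

/-- if `S` satisfies `S 0 = S 1 = S 2 = 1` and the recurrence
`S n = S (n-1) + ∑_{j=3}^{n} S (j-2) * S (n-j)` for `n ≥ 3`, then `S n` is the
number of noncrossing partial matchings on `n` points on a line where no arc
connects two adjacent points (equivalently, 3412-avoiding involutions on
`{1,…,n}` with no transposition `(i,i+1)`). -/
theorem statement0 (S : ℕ → ℕ) (h0 : S 0 = 1) (h1 : S 1 = 1) (h2 : S 2 = 1)
    (hrec : ∀ n, 3 ≤ n → S n = S (n - 1) + ∑ j ∈ Finset.Icc 3 n, S (j - 2) * S (n - j)) :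
    ∀ n, S n =
      Nat.card {M : Finset (Fin n × Fin n) // IsMatching n M ∧ Noncrossing n M} := by
  have key : ∀ n, S n = TT n := by
    intro n
    induction n using Nat.strong_induction_on with
    | _ n ih =>
      rcases Nat.lt_or_ge n 3 with h | h
      · interval_cases n
        · rw [h0]; decide
        · rw [h1]; decide
        · rw [h2]; decide
      · rw [hrec n h, TT_rec n h]
        congr 1
        · exact ih (n - 1) (by omega)
        · apply Finset.sum_congr rfl
          intro j hj
          rw [Finset.mem_Icc] at hj
          rw [ih (j - 2) (by omega), ih (n - j) (by omega)]
  intro n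
  rw [key n, ← TT_eq n]
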